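/- Assume MA(ω₁). Then every Aronszajn tree is special, i.e. is the union of countably many antichains. -/

import Mathlib

universe u

open Cardinal Ordinal Set Classical

noncomputable def omega1 : Ordinal.{u} := (Cardinal.aleph 1).ord

/-- A tree: a partial order in which the set of strict predecessors of each element
is well-ordered by `<`. -/
def IsTree (T : Type u) [PartialOrder T] : Prop :=
  ∀ x : T, IsWellOrder {y : T // y < x} (fun a b => (a : T) < (b : T))

/-- The height of an element of a tree: the order type of its set of strict predecessors. -/
noncomputable def treeHeight {T : Type u} [PartialOrder T] (x : T) : Ordinal.{u} :=
  if h : IsWellOrder {y : T // y < x} (fun a b => (a : T) < (b : T)) then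
    @Ordinal.type _ _ h else 0

/-- The tree has height `ω₁`: every level below `ω₁` is nonempty and the level `ω₁` is empty
(equivalently, all heights are `< ω₁`). -/
def HasHeightOmega1 (T : Type u) [PartialOrder T] : Prop :=
  (∀ α : Ordinal.{u}, α < omega1.{u} → ∃ x : T, treeHeight x = α) ∧
    ∀ x : T, treeHeight x < omega1.{u}

def NoUncountableChain (T : Type u) [PartialOrder T] : Prop :=
  ∀ C : Set T, IsChain (· < ·) C → C.Countable

def IsWideAronszajn (T : Type u) [PartialOrder T] : Prop :=
  IsTree T ∧ Cardinal.mk T = Cardinal.aleph.{u} 1 ∧ HasHeightOmega1 T ∧ NoUncountableChain T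

def IsAronszajn (T : Type u) [PartialOrder T] : Prop :=
  IsTree T ∧ HasHeightOmega1 T ∧
    (∀ α : Ordinal.{u}, {x : T | treeHeight x = α}.Countable) ∧ NoUncountableChain T

def IsWeakEmbedding {T₁ T₂ : Type u} [PartialOrder T₁] [PartialOrder T₂] (f : T₁ → T₂) : Prop :=
  ∀ x y : T₁, x < y → f x < f y

/-- Martin's axiom for ℵ₁ many dense sets. -/
def MAomega1 : Prop :=
  ∀ (P : Type u) [PartialOrder P], Nonempty P →
    (∀ A : Set P, (A.Pairwise fun p q => ¬ ∃ r, p ≤ r ∧ q ≤ r) → A.Countable) →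
    ∀ 𝒟 : Set (Set P), Cardinal.mk 𝒟 ≤ Cardinal.aleph.{u} 1 →
      (∀ D ∈ 𝒟, ∀ p : P, ∃ q ∈ D, p ≤ q) →
      ∃ G : Set P, (∀ p ∈ G, ∀ q ∈ G, ∃ r ∈ G, p ≤ r ∧ q ≤ r) ∧
        (∀ p ∈ G, ∀ q, q ≤ p → q ∈ G) ∧ ∀ D ∈ 𝒟, (G ∩ D).Nonempty

/-- A bundled partially ordered type. -/
structure PoType : Type (u + 1) where
  carrier : Type u
  str : PartialOrder carrier

attribute [instance] PoType.str

/-- A tree is special if it is the union of countably many antichains. -/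
def IsSpecialTree (T : Type u) [PartialOrder T] : Prop :=
  ∃ A : ℕ → Set T, (∀ n, IsAntichain (· ≤ ·) (A n)) ∧ ∀ x : T, ∃ n, x ∈ A n


universe v

lemma uncountable_fiber {α β : Type*} {s : Set α} {t : Set β} (f : α → β)
    (hs : ¬ s.Countable) (ht : t.Countable) (hf : ∀ a ∈ s, f a ∈ t) :
    ∃ b ∈ t, ¬ {a | a ∈ s ∧ f a = b}.Countable := by
  by_contra h
  push_neg at h
  apply hs
  have hsub : s ⊆ ⋃ b ∈ t, {a | a ∈ s ∧ f a = b} := fun a ha =>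
    Set.mem_biUnion (hf a ha) ⟨ha, rfl⟩
  exact (Set.Countable.biUnion ht (fun b hb => h b hb)).mono hsub

lemma freeSet : ∀ (k : ℕ) {ι : Type*} (X : Set ι) (F : ι → Set ι),
    ¬ X.Countable → (∀ a, (F a).Finite) → (∀ a, (F a).ncard ≤ k) →
    ∃ Y ⊆ X, ¬ Y.Countable ∧ ∀ a ∈ Y, ∀ b ∈ Y, a ≠ b → a ∉ F b := by
  intro k
  induction k with
  | zero =>
    intro ι X F hX hfin hcard
    refine ⟨X, Subset.rfl, hX, fun a ha b hb hab => ?_⟩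
    have : F b = ∅ := by
      have h1 := hcard b
      rwa [Nat.le_zero, Set.ncard_eq_zero (hfin b)] at h1
    simp [this]
  | succ k ih =>
    intro ι X F hX hfin hcard
    have hch : ∀ c ⊆ {Y | Y ⊆ X ∧ ∀ a ∈ Y, ∀ b ∈ Y, a ≠ b → a ∉ F b},
        IsChain (fun x1 x2 => x1 ⊆ x2) c →
        ∃ ub ∈ {Y | Y ⊆ X ∧ ∀ a ∈ Y, ∀ b ∈ Y, a ≠ b → a ∉ F b}, ∀ s ∈ c, s ⊆ ub := by
      intro c hc hchain
      refine ⟨⋃₀ c, ⟨?_, ?_⟩, fun s hs => subset_sUnion_of_mem hs⟩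
      · exact sUnion_subset fun Y hY => (hc hY).1
      · rintro a ⟨Y1, hY1, ha⟩ b ⟨Y2, hY2, hb⟩ hab
        rcases hchain.total hY1 hY2 with h | h
        · exact (hc hY2).2 a (h ha) b hb hab
        · exact (hc hY1).2 a ha b (h hb) hab
    obtain ⟨M, hM⟩ := zorn_subset _ hch
    obtain ⟨hMX, hMfree⟩ := hM.prop
    by_cases hMc : ¬ M.Countable
    · exact ⟨M, hMX, hMc, hMfree⟩
    push_neg at hMc
    set Bad : Set ι := M ∪ ⋃ c ∈ M, F c with hBadDef
    have hBadc : Bad.Countable :=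
      hMc.union (Set.Countable.biUnion hMc fun c _ => (hfin c).countable)
    have hXd : ¬ (X \ Bad).Countable := by
      intro h
      exact hX (((h.union hBadc).mono (fun a ha => by
        by_cases hb : a ∈ Bad
        · exact Or.inr hb
        · exact Or.inl ⟨ha, hb⟩)))
    have key : ∀ d ∈ X \ Bad, ∃ c ∈ M, c ∈ F d := by
      intro d hd
      by_contra hno
      push_neg at hno
      have hdM : d ∉ M := fun h => hd.2 (Or.inl h)
      have hfree : insert d M ∈ {Y | Y ⊆ X ∧ ∀ a ∈ Y, ∀ b ∈ Y, a ≠ b → a ∉ F b} := by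
        refine ⟨insert_subset hd.1 hMX, ?_⟩
        intro a ha b hb hab
        rcases ha with rfl | ha
        · rcases hb with rfl | hb
          · exact absurd rfl hab
          · exact fun h => hd.2 (Or.inr (Set.mem_biUnion hb h))
        · rcases hb with rfl | hb
          · exact fun h => hno a ha h
          · exact hMfree a ha b hb hab
      have := hM.eq_of_le hfree (subset_insert d M)
      exact hdM (this ▸ mem_insert d M)
    set g : ι → ι := fun d => if h : d ∈ X \ Bad then (key d h).choose else d with hg
    have hgmem : ∀ d ∈ X \ Bad, g d ∈ M ∧ g d ∈ F d := by
      intro d hd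
      simp only [hg, dif_pos hd]
      exact ⟨(key d hd).choose_spec.1, (key d hd).choose_spec.2⟩
    obtain ⟨cs, hcsM, hY0⟩ := uncountable_fiber g hXd hMc (fun d hd => (hgmem d hd).1)
    set Y0 := {a | a ∈ X \ Bad ∧ g a = cs} with hY0def
    set F' : ι → Set ι := fun a => if cs ∈ F a then F a \ {cs} else ∅ with hF'
    have hfin' : ∀ a, (F' a).Finite := by
      intro a; simp only [hF']
      split
      · exact (hfin a).diff
      · exact finite_empty
    have hcard' : ∀ a, (F' a).ncard ≤ k := by
      intro a; simp only [hF']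
      split
      · rename_i h
        rw [Set.ncard_diff_singleton_of_mem h]
        have := hcard a; omega
      · simp
    obtain ⟨Y, hYsub, hYc, hYfree⟩ := ih Y0 F' hY0 hfin' hcard'
    refine ⟨Y \ {cs}, ?_, ?_, ?_⟩
    · intro a ha
      exact (hYsub ha.1).1.1
    · intro h
      exact hYc ((h.union (countable_singleton cs)).mono (fun a ha => by
        by_cases h2 : a = cs
        · exact Or.inr h2
        · exact Or.inl ⟨ha, h2⟩))
    · intro a ha b hb hab haF
      have hbY0 : b ∈ Y0 := hYsub hb.1
      have hcsb : cs ∈ F b := hbY0.2 ▸ (hgmem b hbY0.1).2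
      have : a ∈ F' b := by
        simp only [hF', if_pos hcsb]
        exact ⟨haF, ha.2⟩
      exact hYfree a ha.1 b hb.1 hab this

lemma deltaSystem : ∀ (n : ℕ) {X : Type*} (S : Set (Finset X)),
    ¬ S.Countable → (∀ s ∈ S, s.card = n) →
    ∃ (R : Finset X) (S' : Set (Finset X)), S' ⊆ S ∧ ¬ S'.Countable ∧
      ∀ s ∈ S', ∀ t ∈ S', s ≠ t → s ∩ t = R := by
  intro n
  induction n with
  | zero =>
    intro X S hS hcard
    exact absurd ((countable_singleton (∅ : Finset X)).mono
      (fun s hs => by simpa using Finset.card_eq_zero.mp (hcard s hs))) hS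
  | succ n ih =>
    intro X S hS hcard
    by_cases hA : ∃ x, ¬ {s | s ∈ S ∧ x ∈ s}.Countable
    · obtain ⟨x, hx⟩ := hA
      set Sx := {s | s ∈ S ∧ x ∈ s} with hSx
      set S2 := (fun s => Finset.erase s x) '' Sx with hS2def
      have hS2 : ¬ S2.Countable := by
        intro h
        refine hx ((h.image (insert x ·)).mono ?_)
        rintro s ⟨hsS, hxs⟩
        exact ⟨s.erase x, Set.mem_image_of_mem _ ⟨hsS, hxs⟩, Finset.insert_erase hxs⟩
      have hcard2 : ∀ t ∈ S2, t.card = n := by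
        rintro t ⟨s, hs, rfl⟩
        rw [Finset.card_erase_of_mem hs.2, hcard s hs.1]
        omega
      obtain ⟨R', S2', hsub2, hS2'c, hroot⟩ := ih S2 hS2 hcard2
      set S' := {s | s ∈ Sx ∧ s.erase x ∈ S2'} with hS'def
      have hS'c : ¬ S'.Countable := by
        intro h
        refine hS2'c (((h.image (fun s => Finset.erase s x))).mono ?_)
        intro t ht
        obtain ⟨s, hsx, rfl⟩ := hsub2 ht
        exact Set.mem_image_of_mem _ ⟨hsx, ht⟩
      refine ⟨insert x R', S', fun s hs => hs.1.1, hS'c, ?_⟩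
      intro s hs t ht hst
      have hxs : x ∈ s := hs.1.2
      have hxt : x ∈ t := ht.1.2
      have hne : s.erase x ≠ t.erase x := fun h => hst (by
        rw [← Finset.insert_erase hxs, h, Finset.insert_erase hxt])
      have hR' := hroot _ hs.2 _ ht.2 hne
      ext a
      constructor
      · intro ha
        rcases Finset.mem_inter.mp ha with ⟨has, hat⟩
        by_cases hax : a = x
        · exact hax ▸ Finset.mem_insert_self x R'
        · refine Finset.mem_insert_of_mem ?_
          rw [← hR']
          exact Finset.mem_inter.mpr ⟨Finset.mem_erase.mpr ⟨hax, has⟩,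
            Finset.mem_erase.mpr ⟨hax, hat⟩⟩
      · intro ha
        rcases Finset.mem_insert.mp ha with rfl | ha
        · exact Finset.mem_inter.mpr ⟨hxs, hxt⟩
        · rw [← hR'] at ha
          rcases Finset.mem_inter.mp ha with ⟨h1, h2⟩
          exact Finset.mem_inter.mpr ⟨Finset.mem_of_mem_erase h1, Finset.mem_of_mem_erase h2⟩
    · push_neg at hA
      have hch : ∀ c ⊆ {Y : Set (Finset X) | Y ⊆ S ∧ ∀ s ∈ Y, ∀ t ∈ Y, s ≠ t → s ∩ t = ∅},
          IsChain (fun x1 x2 => x1 ⊆ x2) c →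
          ∃ ub ∈ {Y : Set (Finset X) | Y ⊆ S ∧ ∀ s ∈ Y, ∀ t ∈ Y, s ≠ t → s ∩ t = ∅},
            ∀ s ∈ c, s ⊆ ub := by
        intro c hc hchain
        refine ⟨⋃₀ c, ⟨sUnion_subset fun Y hY => (hc hY).1, ?_⟩,
          fun s hs => subset_sUnion_of_mem hs⟩
        rintro s ⟨Y1, hY1, hs⟩ t ⟨Y2, hY2, ht⟩ hst
        rcases hchain.total hY1 hY2 with h | h
        · exact (hc hY2).2 s (h hs) t ht hst
        · exact (hc hY1).2 s hs t (h ht) hst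
      obtain ⟨M, hM⟩ := zorn_subset _ hch
      obtain ⟨hMS, hMdisj⟩ := hM.prop
      by_cases hMc : ¬ M.Countable
      · exact ⟨∅, M, hMS, hMc, hMdisj⟩
      push_neg at hMc
      exfalso
      set U : Set X := ⋃ t ∈ M, (t : Set X) with hU
      have hUc : U.Countable := Set.Countable.biUnion hMc fun t _ => t.countable_toSet
      set Bad : Set (Finset X) := ⋃ x ∈ U, {s | s ∈ S ∧ x ∈ s} with hBad
      have hBadc : Bad.Countable := Set.Countable.biUnion hUc fun x _ => hA x
      have hex : ∃ s0, s0 ∈ S \ Bad := by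
        by_contra h
        push_neg at h
        exact hS (hBadc.mono (fun s hsS => not_not.mp (fun hB => h s ⟨hsS, hB⟩)))
      obtain ⟨s0, hs0S, hs0B⟩ := hex
      have hs0M : s0 ∉ M := by
        intro hmem
        have hne : s0.Nonempty := by
          rw [← Finset.card_pos, hcard s0 hs0S]; omega
        obtain ⟨y, hy⟩ := hne
        exact hs0B (Set.mem_biUnion (Set.mem_biUnion hmem hy) ⟨hs0S, hy⟩)
      have hfree : insert s0 M ∈ {Y : Set (Finset X) | Y ⊆ S ∧ ∀ s ∈ Y, ∀ t ∈ Y, s ≠ t → s ∩ t = ∅} := by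
        refine ⟨insert_subset hs0S hMS, ?_⟩
        have hdisj : ∀ t ∈ M, s0 ∩ t = ∅ := by
          intro t htM
          by_contra hne
          obtain ⟨y, hy⟩ := Finset.nonempty_iff_ne_empty.mpr hne
          rcases Finset.mem_inter.mp hy with ⟨hys, hyt⟩
          exact hs0B (Set.mem_biUnion (Set.mem_biUnion htM hyt) ⟨hs0S, hys⟩)
        intro s hs t ht hst
        rcases hs with rfl | hs
        · rcases ht with rfl | ht
          · exact absurd rfl hst
          · exact hdisj t ht
        · rcases ht with rfl | ht
          · rw [Finset.inter_comm]; exact hdisj s hs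
          · exact hMdisj s hs t ht hst
      have := hM.eq_of_le hfree (subset_insert s0 M)
      exact hs0M (this ▸ mem_insert s0 M)

section TreeLemmas
variable {T : Type u} [PartialOrder T]

lemma treeHeight_eq (hT : IsTree T) (x : T) :
    treeHeight x = @Ordinal.type _ _ (hT x) := dif_pos (hT x)

lemma pred_comparable (hT : IsTree T) {x y z : T} (hy : y < x) (hz : z < x) :
    y ≤ z ∨ z ≤ y := by
  have h := hT x
  rcases @trichotomous _ (fun a b : {t : T // t < x} => (a : T) < (b : T))
      h.toTrichotomous ⟨y, hy⟩ ⟨z, hz⟩ with h1 | h1 | h1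
  · exact Or.inl (le_of_lt h1)
  · exact Or.inl (le_of_eq (congrArg Subtype.val h1))
  · exact Or.inr (le_of_lt h1)

lemma comparable_of_le (hT : IsTree T) {x y r : T} (hx : x ≤ r) (hy : y ≤ r) :
    x ≤ y ∨ y ≤ x := by
  rcases eq_or_lt_of_le hx with rfl | hx'
  · exact Or.inr hy
  rcases eq_or_lt_of_le hy with rfl | hy'
  · exact Or.inl (le_of_lt hx')
  exact pred_comparable hT hx' hy'

lemma pred_countable (hT : IsTree T) (hHt : ∀ x : T, treeHeight x < omega1.{u}) (x : T) :
    {y : T | y < x}.Countable := by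
  rw [Cardinal.countable_iff_lt_aleph_one]
  have h1 : treeHeight x < (Cardinal.aleph 1).ord := hHt x
  rw [treeHeight_eq hT, Cardinal.lt_ord, Ordinal.card_type] at h1
  exact h1

lemma exists_minimal_le (hT : IsTree T) {W : Set T} {z : T} (hz : z ∈ W) :
    ∃ m ∈ W, m ≤ z ∧ ∀ w ∈ W, ¬ w < m := by
  by_cases hV : {w : {y : T // y < z} | (w : T) ∈ W}.Nonempty
  · obtain ⟨m, hmW, hmin⟩ := (hT z).toIsWellFounded.wf.has_min _ hV
    refine ⟨(m : T), hmW, le_of_lt m.2, fun w hw hlt => ?_⟩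
    exact hmin ⟨w, lt_trans hlt m.2⟩ hw hlt
  · exact ⟨z, hz, le_rfl, fun w hw hlt => hV ⟨⟨w, hlt⟩, hw⟩⟩

lemma Iic_ordinal_countable {γ : Ordinal.{u}} (hγ : γ < omega1.{u}) :
    (Set.Iic γ).Countable := by
  rw [Cardinal.countable_iff_lt_aleph_one]
  rw [← Order.Iio_succ, Ordinal.mk_Iio_ordinal]
  have h1 : (Order.succ γ).card < Cardinal.aleph 1 := by
    rw [← Cardinal.lt_ord]
    exact (Cardinal.isSuccLimit_ord (le_of_lt Cardinal.aleph0_lt_aleph_one)).succ_lt hγ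
  calc Cardinal.lift.{u+1} (Order.succ γ).card
      < Cardinal.lift.{u+1} (Cardinal.aleph.{u} 1) := Cardinal.lift_lt.mpr h1
    _ = Cardinal.aleph 1 := by rw [Cardinal.lift_aleph, Ordinal.lift_one]

lemma exists_height_gt (hLev : ∀ α : Ordinal.{u}, {x : T | treeHeight x = α}.Countable)
    {E : Set T} (hE : ¬ E.Countable) {γ : Ordinal.{u}} (hγ : γ < omega1.{u}) :
    ∃ x ∈ E, γ < treeHeight x := by
  by_contra h
  push_neg at h
  apply hE
  have hsub : E ⊆ ⋃ α ∈ Set.Iic γ, {x : T | treeHeight x = α} := fun x hx =>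
    Set.mem_biUnion (h x hx) rfl
  exact (Set.Countable.biUnion (Iic_ordinal_countable hγ) (fun α _ => hLev α)).mono hsub

lemma bdd_heights {C : Set T} (hC : C.Countable)
    (hHt : ∀ x : T, treeHeight x < omega1.{u}) :
    ∃ γ, γ < omega1.{u} ∧ ∀ x ∈ C, treeHeight x ≤ γ := by
  rcases C.eq_empty_or_nonempty with rfl | hne
  · refine ⟨0, ?_, by simp⟩
    rcases isEmpty_or_nonempty T with hT | ⟨⟨x⟩⟩
    · rw [omega1, Cardinal.lt_ord, Ordinal.card_zero]
      exact lt_of_le_of_lt (Cardinal.zero_le _) Cardinal.aleph0_lt_aleph_one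
    · exact lt_of_le_of_lt zero_le (hHt x)
  have : Countable ↥C := hC.to_subtype
  set o : ↥C → Ordinal.{u} := fun y => treeHeight (y : T) with ho
  have hlt : iSup o < omega1.{u} := by
    rw [omega1, Cardinal.ord_aleph]
    exact Ordinal.iSup_lt_omega_one (fun y => by have := hHt (y : T); rwa [omega1, Cardinal.ord_aleph] at this)
  refine ⟨iSup o, hlt, fun x hx => ?_⟩
  exact le_ciSup (Ordinal.bddAbove_range o) (⟨x, hx⟩ : ↥C)

lemma image_uncountable {α β : Type*} {f : α → β} (hf : Function.Injective f) {s : Set α}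
    (hs : ¬ s.Countable) : ¬ (f '' s).Countable := fun h =>
  hs ((h.preimage_of_injOn hf.injOn).mono (Set.subset_preimage_image f s))

end TreeLemmas

lemma exists_uncountable_antichain {T : Type u} [PartialOrder T]
    (hMA : MAomega1.{u}) (hT : IsAronszajn T) {E : Set T} (hE : ¬ E.Countable) :
    ∃ A ⊆ E, ¬ A.Countable ∧ ∀ x ∈ A, ∀ y ∈ A, x ≠ y → ¬ x ≤ y := by
  obtain ⟨hTree, hHt, hLev, hChain⟩ := hT
  classical
  set E' : Set T := {x | x ∈ E ∧ ¬ {y | y ∈ E ∧ x ≤ y}.Countable} with hE'def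
  set W : Set T := E \ E' with hWdef
  set M : Set T := {m | m ∈ W ∧ ∀ w ∈ W, ¬ w < m} with hMdef
  by_cases hM : ¬ M.Countable
  · refine ⟨M, fun m hm => hm.1.1, hM, ?_⟩
    intro x hx y hy hxy hle
    exact hy.2 x hx.1 (lt_of_le_of_ne hle hxy)
  push_neg at hM
  have hWc : W.Countable := by
    have hWsub : W ⊆ ⋃ m ∈ M, {y | y ∈ E ∧ m ≤ y} := by
      intro z hz
      obtain ⟨m, hmW, hmz, hmmin⟩ := exists_minimal_le hTree hz
      exact Set.mem_biUnion (⟨hmW, hmmin⟩ : m ∈ M) ⟨hz.1, hmz⟩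
    refine (Set.Countable.biUnion hM (fun m hm => ?_)).mono hWsub
    have : m ∉ E' := hm.1.2
    rw [hE'def] at this
    simp only [Set.mem_setOf_eq, not_and, not_not] at this
    exact this hm.1.1
  have hE' : ¬ E'.Countable := by
    intro h
    exact hE ((h.union hWc).mono (fun x hx => by
      by_cases h2 : x ∈ E'
      · exact Or.inl h2
      · exact Or.inr ⟨hx, h2⟩))
  by_cases hcc : ∃ A : Set ↥E', ¬ A.Countable ∧ (A.Pairwise fun p q => ¬ ∃ r, p ≤ r ∧ q ≤ r)
  · obtain ⟨A, hAc, hAp⟩ := hcc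
    refine ⟨Subtype.val '' A, ?_, image_uncountable Subtype.val_injective hAc, ?_⟩
    · rintro x ⟨p, hp, rfl⟩
      exact p.2.1
    · rintro x ⟨p, hp, rfl⟩ y ⟨q, hq, rfl⟩ hxy hle
      exact hAp hp hq (fun h => hxy (congrArg Subtype.val h)) ⟨q, hle, le_rfl⟩
  · exfalso
    have hccc : ∀ A : Set ↥E', (A.Pairwise fun p q => ¬ ∃ r, p ≤ r ∧ q ≤ r) → A.Countable := by
      intro A hP
      by_contra hC
      exact hcc ⟨A, hC, hP⟩
    have hNE : Nonempty ↥E' := by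
      rcases Set.eq_empty_or_nonempty E' with h | ⟨x, hx⟩
      · exact absurd (h ▸ countable_empty) hE'
      · exact ⟨⟨x, hx⟩⟩
    set D : ↥(Set.Iio omega1.{u}) → Set ↥E' := fun ξ =>
      {y | (ξ : Ordinal.{u}) < treeHeight (y : T)} with hD
    have hmk : Cardinal.mk ↥(Set.range D) ≤ Cardinal.aleph.{u} 1 := by
      have h1 := @Cardinal.mk_range_le_lift _ _ D
      have hcard : omega1.{u}.card = Cardinal.aleph 1 := Cardinal.card_ord _
      rw [Ordinal.mk_Iio_ordinal, Cardinal.lift_lift, hcard] at h1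
      exact Cardinal.lift_le.mp h1
    have hdense : ∀ Ds ∈ Set.range D, ∀ p : ↥E', ∃ q ∈ Ds, p ≤ q := by
      rintro Ds ⟨ξ, rfl⟩ p
      have hγ : (ξ : Ordinal.{u}) < omega1.{u} := ξ.2
      have hEp : ¬ {y | y ∈ E ∧ (p : T) ≤ y}.Countable := p.2.2
      have hF : ¬ {y | y ∈ E' ∧ (p : T) ≤ y}.Countable := by
        intro h
        refine hEp ((h.union hWc).mono ?_)
        intro y hy
        by_cases h2 : y ∈ E'
        · exact Or.inl ⟨h2, hy.2⟩
        · exact Or.inr ⟨hy.1, h2⟩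
      obtain ⟨x, hxF, hxht⟩ := exists_height_gt hLev hF hγ
      exact ⟨⟨x, hxF.1⟩, hxht, hxF.2⟩
    obtain ⟨G, hdir, _, hmeet⟩ := hMA ↥E' hNE hccc (Set.range D) hmk hdense
    have hGchain : IsChain (· < ·) (Subtype.val '' G) := by
      rintro x ⟨p, hp, rfl⟩ y ⟨q, hq, rfl⟩ hxy
      obtain ⟨r, hr, hpr, hqr⟩ := hdir p hp q hq
      rcases comparable_of_le hTree (Subtype.coe_le_coe.mpr hpr) (Subtype.coe_le_coe.mpr hqr)
        with h | h
      · exact Or.inl (lt_of_le_of_ne h hxy)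
      · exact Or.inr (lt_of_le_of_ne h (Ne.symm hxy))
    have hGc : (Subtype.val '' G).Countable := hChain _ hGchain
    obtain ⟨γ, hγ1, hγ2⟩ := bdd_heights hGc hHt.2
    obtain ⟨q, hqG, hqD⟩ := hmeet (D ⟨γ, hγ1⟩) ⟨⟨γ, hγ1⟩, rfl⟩
    have hle : treeHeight (q : T) ≤ γ := hγ2 _ ⟨q, hqG, rfl⟩
    rw [hD] at hqD
    exact absurd hle (not_le.mpr hqD)

lemma two_incomparable {T : Type u} [PartialOrder T] (hMA : MAomega1.{u}) (hT : IsAronszajn T)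
    {ι : Type v} (n : ℕ) (S : Set ι) (g : ι → Finset T)
    (hS : ¬ S.Countable)
    (hdisj : ∀ a ∈ S, ∀ b ∈ S, a ≠ b → ∀ x ∈ g a, x ∉ g b)
    (hcard : ∀ a ∈ S, (g a).card ≤ n) (hne : ∀ a ∈ S, (g a).Nonempty) :
    ∃ a ∈ S, ∃ b ∈ S, a ≠ b ∧ ∀ x ∈ g a, ∀ y ∈ g b, ¬ x ≤ y ∧ ¬ y ≤ x := by
  classical
  have hSne : S.Nonempty := by
    rcases S.eq_empty_or_nonempty with rfl | h
    · exact absurd countable_empty hS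
    · exact h
  obtain ⟨a0, ha0⟩ := hSne
  obtain ⟨x0, _⟩ := hne a0 ha0
  -- enumerations
  have henum : ∀ a, ∃ e : Fin n → T, (a ∈ S → (∀ i, e i ∈ g a) ∧ ∀ x ∈ g a, ∃ i, e i = x) := by
    intro a
    by_cases ha : a ∈ S
    · obtain ⟨y0, hy0⟩ := hne a ha
      set L := (g a).toList with hL
      refine ⟨fun i => if h : (i : ℕ) < L.length then L.get ⟨i, h⟩ else y0, fun _ => ⟨?_, ?_⟩⟩
      · intro i
        show (if h : (i : ℕ) < L.length then L.get ⟨i, h⟩ else y0) ∈ g a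
        by_cases h : (i : ℕ) < L.length
        · rw [dif_pos h]
          exact Finset.mem_toList.mp (L.get_mem ⟨i, h⟩)
        · rw [dif_neg h]; exact hy0
      · intro x hx
        obtain ⟨idx, hidx⟩ := List.get_of_mem (Finset.mem_toList.mpr hx)
        have hlt : (idx : ℕ) < n := by
          have h4 : (g a).toList.length ≤ n := by
            rw [Finset.length_toList]; exact hcard a ha
          exact lt_of_lt_of_le idx.2 h4
        refine ⟨⟨idx, hlt⟩, ?_⟩
        show (if h : ((⟨(idx : ℕ), hlt⟩ : Fin n) : ℕ) < L.length then L.get ⟨_, h⟩ else y0) = x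
        have h2 : ((⟨(idx : ℕ), hlt⟩ : Fin n) : ℕ) < L.length := idx.2
        rw [dif_pos h2]
        rw [← hidx]
    · exact ⟨fun _ => x0, fun h => absurd h ha⟩
  choose e he using henum
  -- Step 1 : refine to coordinatewise antichains
  have hstep : ∀ k : ℕ, k ≤ n → ∃ S' ⊆ S, ¬ S'.Countable ∧
      ∀ i : Fin n, (i : ℕ) < k → ∀ a ∈ S', ∀ b ∈ S', a ≠ b → ¬ (e a i ≤ e b i) := by
    intro k
    induction k with
    | zero => exact fun _ => ⟨S, Subset.rfl, hS, fun i hi => absurd hi (Nat.not_lt_zero _)⟩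
    | succ k ihk =>
      intro hk
      obtain ⟨S', hS'sub, hS'c, hS'ac⟩ := ihk (Nat.le_of_succ_le hk)
      set i0 : Fin n := ⟨k, hk⟩ with hi0
      have hinj : Set.InjOn (fun a => e a i0) S' := by
        intro a ha b hb hab
        simp only at hab
        by_contra hne2
        exact hdisj a (hS'sub ha) b (hS'sub hb) hne2 (e a i0)
          ((he a (hS'sub ha)).1 i0) (by rw [hab]; exact (he b (hS'sub hb)).1 i0)
      have hEc : ¬ ((fun a => e a i0) '' S').Countable := by
        intro h
        exact hS'c (Set.countable_of_injective_of_countable_image hinj h)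
      obtain ⟨A, hAsub, hAc, hAanti⟩ := exists_uncountable_antichain hMA hT hEc
      set S'' := {a | a ∈ S' ∧ e a i0 ∈ A} with hS''
      have hS''c : ¬ S''.Countable := by
        intro h
        refine hAc (((h.image (fun a => e a i0))).mono ?_)
        intro x hx
        obtain ⟨a, ha, rfl⟩ := hAsub hx
        exact Set.mem_image_of_mem _ ⟨ha, hx⟩
      refine ⟨S'', fun a ha => hS'sub ha.1, hS''c, ?_⟩
      intro i hi a ha b hb hab
      by_cases hik : (i : ℕ) < k
      · exact hS'ac i hik a ha.1 b hb.1 hab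
      · have hik2 : (i : ℕ) = k := by omega
        have : i = i0 := Fin.ext (by simp [hi0, hik2])
        subst this
        have hne3 : e a i0 ≠ e b i0 := fun h => hab (hinj ha.1 hb.1 h)
        exact hAanti _ ha.2 _ hb.2 hne3
  obtain ⟨S1, hS1sub, hS1c, hS1ac⟩ := hstep n le_rfl
  have hS1ac' : ∀ i : Fin n, ∀ a ∈ S1, ∀ b ∈ S1, a ≠ b → ¬ (e a i ≤ e b i) :=
    fun i => hS1ac i i.2
  -- uniqueness of lower-linked partner
  obtain ⟨hTree, _, _, _⟩ := hT
  have huniq : ∀ a ∈ S1, ∀ i j : Fin n, ∀ b ∈ S1, ∀ c ∈ S1,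
      e b j < e a i → e c j < e a i → b = c := by
    intro a _ i j b hb c hc hbj hcj
    by_contra hbc
    rcases pred_comparable hTree hbj hcj with h | h
    · exact hS1ac' j b hb c hc hbc h
    · exact hS1ac' j c hc b hb (Ne.symm hbc) h
  -- the finite set mapping
  set w : ι → (Fin n × Fin n) → ι := fun a ij =>
    if h : ∃ b ∈ S1, b ≠ a ∧ e b ij.2 < e a ij.1 then h.choose else a with hw
  set F : ι → Set ι := fun a => Set.range (w a) with hF
  have hFfin : ∀ a, (F a).Finite := fun a => Set.finite_range _
  have hFcard : ∀ a, (F a).ncard ≤ n * n := by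
    intro a
    have h1 : F a = ↑(Finset.image (w a) Finset.univ) := by
      rw [hF, Finset.coe_image, Finset.coe_univ, Set.image_univ]
    rw [h1, Set.ncard_coe_finset]
    calc (Finset.image (w a) Finset.univ).card ≤ Finset.univ.card := Finset.card_image_le
      _ = n * n := by rw [Finset.card_univ, Fintype.card_prod, Fintype.card_fin]
  obtain ⟨Y, hYsub, hYc, hYfree⟩ := freeSet (n * n) S1 F hS1c hFfin hFcard
  have hYnonSub : ¬ Y.Subsingleton := fun h => hYc h.countable
  rw [Set.not_subsingleton_iff] at hYnonSub
  obtain ⟨a, ha, b, hb, hab⟩ := hYnonSub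
  have haS1 : a ∈ S1 := hYsub ha
  have hbS1 : b ∈ S1 := hYsub hb
  have haS : a ∈ S := hS1sub haS1
  have hbS : b ∈ S := hS1sub hbS1
  refine ⟨a, haS, b, hbS, hab, ?_⟩
  intro x hx y hy
  obtain ⟨i, hi⟩ := (he a haS).2 x hx
  obtain ⟨j, hj⟩ := (he b hbS).2 y hy
  subst hi hj
  have hxy : e a i ≠ e b j := fun h =>
    hdisj a haS b hbS hab _ hx (h ▸ hy)
  constructor
  · intro hle
    have hlt : e a i < e b j := lt_of_le_of_ne hle hxy
    have hex : ∃ c ∈ S1, c ≠ b ∧ e c ((j, i) : Fin n × Fin n).2 < e b ((j, i) : Fin n × Fin n).1 :=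
      ⟨a, haS1, hab, hlt⟩
    have hchoose := hex.choose_spec
    have hwb : w b (j, i) = hex.choose := by rw [hw]; exact dif_pos hex
    have hac : hex.choose = a :=
      huniq b hbS1 j i hex.choose hchoose.1 a haS1 hchoose.2.2 hlt
    have : a ∈ F b := ⟨(j, i), by rw [hwb, hac]⟩
    exact hYfree a ha b hb hab this
  · intro hle
    have hlt : e b j < e a i := lt_of_le_of_ne hle (Ne.symm hxy)
    have hex : ∃ c ∈ S1, c ≠ a ∧ e c ((i, j) : Fin n × Fin n).2 < e a ((i, j) : Fin n × Fin n).1 :=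
      ⟨b, hbS1, Ne.symm hab, hlt⟩
    have hchoose := hex.choose_spec
    have hwa : w a (i, j) = hex.choose := by rw [hw]; exact dif_pos hex
    have hbc : hex.choose = b :=
      huniq a haS1 i j hex.choose hchoose.1 b hbS1 hchoose.2.2 hlt
    have : b ∈ F a := ⟨(i, j), by rw [hwa, hbc]⟩
    exact hYfree b hb a ha (Ne.symm hab) this

def Good {T : Type u} [PartialOrder T] (s : Finset (T × ℕ)) : Prop :=
  (∀ p ∈ s, ∀ q ∈ s, (p : T × ℕ).1 = (q : T × ℕ).1 → (p : T × ℕ).2 = (q : T × ℕ).2) ∧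
    ∀ p ∈ s, ∀ q ∈ s, (p : T × ℕ).1 < (q : T × ℕ).1 → (p : T × ℕ).2 ≠ (q : T × ℕ).2

section CCC
variable {T : Type u} [PartialOrder T]

noncomputable def pdom (p : {s : Finset (T × ℕ) // Good s}) : Finset T :=
  p.1.image Prod.fst

noncomputable def pval (p : {s : Finset (T × ℕ) // Good s}) (x : T) : ℕ :=
  if h : ∃ m, (x, m) ∈ p.1 then h.choose else 0

lemma mem_pdom (p : {s : Finset (T × ℕ) // Good s}) (x : T) :
    x ∈ pdom p ↔ ∃ m, (x, m) ∈ p.1 := by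
  simp only [pdom, Finset.mem_image, Prod.exists]
  constructor
  · rintro ⟨a, b, hab, rfl⟩; exact ⟨b, hab⟩
  · rintro ⟨m, hm⟩; exact ⟨x, m, hm, rfl⟩

lemma pval_eq (p : {s : Finset (T × ℕ) // Good s}) (x : T) (m : ℕ)
    (hm : (x, m) ∈ p.1) : pval p x = m := by
  have hex : ∃ m, (x, m) ∈ p.1 := ⟨m, hm⟩
  rw [pval, dif_pos hex]
  exact p.2.1 (x, hex.choose) hex.choose_spec (x, m) hm rfl

lemma mem_iff_pval (p : {s : Finset (T × ℕ) // Good s}) (x : T) (m : ℕ) :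
    (x, m) ∈ p.1 ↔ (x ∈ pdom p ∧ pval p x = m) := by
  constructor
  · intro h
    exact ⟨(mem_pdom p x).mpr ⟨m, h⟩, pval_eq p x m h⟩
  · rintro ⟨hx, rfl⟩
    obtain ⟨m', hm'⟩ := (mem_pdom p x).mp hx
    rw [pval_eq p x m' hm']
    exact hm'

lemma pdom_fiber_countable (d : Finset T) :
    {p : {s : Finset (T × ℕ) // Good s} | pdom p = d}.Countable := by
  classical
  rw [← Set.countable_coe_iff]
  refine Function.Injective.countable
    (f := fun (p : ↥{p : {s : Finset (T × ℕ) // Good s} | pdom p = d}) => (fun x : ↥d => pval p.1 x)) ?_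
  intro p q hpq
  apply Subtype.ext
  apply Subtype.ext
  apply Finset.ext
  rintro ⟨x, m⟩
  rw [mem_iff_pval, mem_iff_pval, p.2, q.2]
  constructor
  · rintro ⟨hx, hv⟩
    refine ⟨hx, ?_⟩
    have := congrFun hpq (⟨x, hx⟩ : ↥d)
    simp only at this
    rw [← this]; exact hv
  · rintro ⟨hx, hv⟩
    refine ⟨hx, ?_⟩
    have := congrFun hpq (⟨x, hx⟩ : ↥d)
    simp only at this
    rw [this]; exact hv

lemma spec_ccc (hMA : MAomega1.{u}) (hT : IsAronszajn T) :
    ∀ A : Set {s : Finset (T × ℕ) // Good s},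
      (A.Pairwise fun p q => ¬ ∃ r, p ≤ r ∧ q ≤ r) → A.Countable := by
  classical
  intro A hA
  by_contra hAc
  -- A is nonempty
  have hAne : A.Nonempty := by
    rcases A.eq_empty_or_nonempty with rfl | h
    · exact absurd countable_empty hAc
    · exact h
  obtain ⟨p0, hp0⟩ := hAne
  -- image of domains is uncountable
  have hdomim : ¬ (pdom '' A).Countable := by
    intro h
    apply hAc
    have hsub : A ⊆ ⋃ d ∈ pdom '' A, {p | pdom p = d} := fun p hp =>
      Set.mem_biUnion (Set.mem_image_of_mem _ hp) rfl
    exact (Set.Countable.biUnion h (fun d _ => pdom_fiber_countable d)).mono hsub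
  -- choose one condition per domain
  set c : Finset T → {s : Finset (T × ℕ) // Good s} := fun d =>
    if h : ∃ p ∈ A, pdom p = d then h.choose else p0 with hc
  set A0 : Set {s : Finset (T × ℕ) // Good s} := {p | ∃ d ∈ pdom '' A, c d = p ∧ pdom p = d}
    with hA0
  have hA0sub : A0 ⊆ A := by
    rintro p ⟨d, hd, hcd, hpd⟩
    have hex : ∃ p ∈ A, pdom p = d := by
      obtain ⟨q, hq, hqd⟩ := hd
      exact ⟨q, hq, hqd⟩
    rw [hc] at hcd
    simp only [dif_pos hex] at hcd
    rw [← hcd]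
    exact hex.choose_spec.1
  have hA0inj : ∀ p ∈ A0, ∀ q ∈ A0, pdom p = pdom q → p = q := by
    rintro p ⟨d, hd, hcd, hpd⟩ q ⟨d', hd', hcd', hqd⟩ hpq
    rw [← hcd, ← hcd']
    have : d = d' := by rw [← hpd, ← hqd, hpq]
    rw [this]
  have hA0c : ¬ A0.Countable := by
    intro h
    apply hdomim
    refine ((h.image pdom).mono ?_)
    rintro d ⟨q, hq, rfl⟩
    have hex : ∃ p ∈ A, pdom p = pdom q := ⟨q, hq, rfl⟩
    refine ⟨c (pdom q), ⟨pdom q, Set.mem_image_of_mem _ hq, rfl, ?_⟩, ?_⟩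
    · rw [hc]; simp only [dif_pos hex]
      exact hex.choose_spec.2
    · rw [hc]; simp only [dif_pos hex]
      exact hex.choose_spec.2
  -- uniformize the cardinality of domains
  obtain ⟨n, _, hA1c⟩ := uncountable_fiber (fun p => (pdom p).card) hA0c
    (Set.countable_univ) (fun p _ => Set.mem_univ _)
  set A1 := {p | p ∈ A0 ∧ (pdom p).card = n} with hA1
  -- delta system on the domains
  have hSd : ¬ (pdom '' A1).Countable := by
    intro h
    apply hA1c
    rw [← Set.countable_coe_iff] at h ⊢
    refine Function.Injective.countable
      (f := fun (p : ↥A1) => (⟨pdom p.1, Set.mem_image_of_mem _ p.2⟩ : ↥(pdom '' A1))) ?_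
    intro p q hpq
    apply Subtype.ext
    exact hA0inj p.1 p.2.1 q.1 q.2.1 (congrArg Subtype.val hpq)
  obtain ⟨R, Sd', hSd'sub, hSd'c, hroot⟩ := deltaSystem n (pdom '' A1) hSd
    (by rintro s ⟨p, hp, rfl⟩; exact hp.2)
  set A2 := {p | p ∈ A1 ∧ pdom p ∈ Sd'} with hA2
  have hA2c : ¬ A2.Countable := by
    intro h
    apply hSd'c
    refine ((h.image pdom).mono ?_)
    intro d hd
    obtain ⟨p, hp, rfl⟩ := hSd'sub hd
    exact Set.mem_image_of_mem _ ⟨hp, hd⟩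
  -- R is contained in every domain
  have hRsub : ∀ p ∈ A2, R ⊆ pdom p := by
    intro p hp
    have hex : ∃ d ∈ Sd', d ≠ pdom p := by
      by_contra h
      push_neg at h
      exact hSd'c ((Set.countable_singleton (pdom p)).mono (fun d hd => h d hd))
    obtain ⟨d', hd', hne⟩ := hex
    rw [← hroot (pdom p) hp.2 d' hd' (Ne.symm hne)]
    exact Finset.inter_subset_left
  -- uniformize values on R
  obtain ⟨v, _, hA3c⟩ := uncountable_fiber (s := A2) (t := (Set.univ : Set (↥R → ℕ)))
    (fun p => (fun x : ↥R => pval p x)) hA2c Set.countable_univ (fun p _ => Set.mem_univ _)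
  set A3 := {p | p ∈ A2 ∧ (fun x : ↥R => pval p x) = v} with hA3
  -- drop the at most one condition with empty tail
  set A4 := {p | p ∈ A3 ∧ pdom p ≠ R} with hA4
  have hA4c : ¬ A4.Countable := by
    intro h
    apply hA3c
    have hsub : A3 ⊆ A4 ∪ {p | p ∈ A3 ∧ pdom p = R} := by
      intro p hp
      by_cases h2 : pdom p = R
      · exact Or.inr ⟨hp, h2⟩
      · exact Or.inl ⟨hp, h2⟩
    refine (Set.Countable.union h ?_).mono hsub
    have hss : {p | p ∈ A3 ∧ pdom p = R}.Subsingleton := by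
      intro p hp q hq
      exact hA0inj p hp.1.1.1.1 q hq.1.1.1.1 (hp.2.trans hq.2.symm)
    exact hss.countable
  -- tails
  have htail_disj : ∀ p ∈ A4, ∀ q ∈ A4, p ≠ q → ∀ x ∈ pdom p \ R, x ∉ pdom q \ R := by
    intro p hp q hq hpq x hxp hxq
    have hdne : pdom p ≠ pdom q := by
      intro h
      exact hpq (hA0inj p hp.1.1.1.1 q hq.1.1.1.1 h)
    have hRint : pdom p ∩ pdom q = R := hroot _ hp.1.1.2 _ hq.1.1.2 hdne
    rcases Finset.mem_sdiff.mp hxp with ⟨hxp1, hxR⟩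
    rcases Finset.mem_sdiff.mp hxq with ⟨hxq1, _⟩
    exact hxR (hRint ▸ Finset.mem_inter.mpr ⟨hxp1, hxq1⟩)
  have htail_card : ∀ p ∈ A4, (pdom p \ R).card ≤ n := by
    intro p hp
    calc (pdom p \ R).card ≤ (pdom p).card := Finset.card_le_card (Finset.sdiff_subset)
      _ = n := hp.1.1.1.2
  have htail_ne : ∀ p ∈ A4, (pdom p \ R).Nonempty := by
    intro p hp
    rw [Finset.sdiff_nonempty]
    intro hsub
    exact hp.2 (Finset.Subset.antisymm hsub (hRsub p hp.1.1))
  obtain ⟨p, hp, q, hq, hpq, hinc⟩ := two_incomparable hMA hT n A4 (fun p => pdom p \ R)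
    hA4c htail_disj htail_card htail_ne
  -- p and q are compatible: contradiction
  have hpA : p ∈ A := hA0sub hp.1.1.1.1
  have hqA : q ∈ A := hA0sub hq.1.1.1.1
  refine hA hpA hqA hpq ?_
  have hagree : ∀ x ∈ R, ∀ m : ℕ, ((x, m) ∈ p.1 ↔ (x, m) ∈ q.1) := by
    intro x hxR m
    have hvp : pval p x = pval q x := by
      have h1 := congrFun hp.1.2 ⟨x, hxR⟩
      have h2 := congrFun hq.1.2 ⟨x, hxR⟩
      simp only at h1 h2
      rw [h1, h2]
    rw [mem_iff_pval, mem_iff_pval]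
    constructor
    · rintro ⟨_, hv⟩
      exact ⟨(hRsub q hq.1.1) hxR, by rw [← hvp]; exact hv⟩
    · rintro ⟨_, hv⟩
      exact ⟨(hRsub p hp.1.1) hxR, by rw [hvp]; exact hv⟩
  have hcross : ∀ a ∈ p.1, ∀ b ∈ q.1, (a : T × ℕ).1 < (b : T × ℕ).1 →
      (a : T × ℕ).2 ≠ (b : T × ℕ).2 := by
    rintro ⟨x, mx⟩ ha ⟨y, my⟩ hb hlt
    simp only at hlt ⊢
    have hxdp : x ∈ pdom p := (mem_pdom p x).mpr ⟨mx, ha⟩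
    have hydq : y ∈ pdom q := (mem_pdom q y).mpr ⟨my, hb⟩
    by_cases hxR : x ∈ R
    · have haq : (x, mx) ∈ q.1 := (hagree x hxR mx).mp ha
      exact q.2.2 (x, mx) haq (y, my) hb hlt
    · by_cases hyR : y ∈ R
      · have hbp : (y, my) ∈ p.1 := (hagree y hyR my).mpr hb
        exact p.2.2 (x, mx) ha (y, my) hbp hlt
      · have hxt : x ∈ pdom p \ R := Finset.mem_sdiff.mpr ⟨hxdp, hxR⟩
        have hyt : y ∈ pdom q \ R := Finset.mem_sdiff.mpr ⟨hydq, hyR⟩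
        exact absurd (le_of_lt hlt) (hinc x hxt y hyt).1
  have hGood : Good (p.1 ∪ q.1) := by
    constructor
    · rintro a ha b hb hfst
      rcases Finset.mem_union.mp ha with ha' | ha' <;>
        rcases Finset.mem_union.mp hb with hb' | hb'
      · exact p.2.1 a ha' b hb' hfst
      · -- a ∈ p, b ∈ q with same first coordinate
        obtain ⟨x, mx⟩ := a
        obtain ⟨y, my⟩ := b
        simp only at hfst
        subst hfst
        have hxdp : x ∈ pdom p := (mem_pdom p x).mpr ⟨mx, ha'⟩
        have hxdq : x ∈ pdom q := (mem_pdom q x).mpr ⟨my, hb'⟩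
        have hdne : pdom p ≠ pdom q := fun h => hpq (hA0inj p hp.1.1.1.1 q hq.1.1.1.1 h)
        have hRint : pdom p ∩ pdom q = R := hroot _ hp.1.1.2 _ hq.1.1.2 hdne
        have hxR : x ∈ R := hRint ▸ Finset.mem_inter.mpr ⟨hxdp, hxdq⟩
        have : (x, mx) ∈ q.1 := (hagree x hxR mx).mp ha'
        exact q.2.1 (x, mx) this (x, my) hb' rfl
      · obtain ⟨x, mx⟩ := a
        obtain ⟨y, my⟩ := b
        simp only at hfst
        subst hfst
        have hxdp : x ∈ pdom p := (mem_pdom p x).mpr ⟨my, hb'⟩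
        have hxdq : x ∈ pdom q := (mem_pdom q x).mpr ⟨mx, ha'⟩
        have hdne : pdom p ≠ pdom q := fun h => hpq (hA0inj p hp.1.1.1.1 q hq.1.1.1.1 h)
        have hRint : pdom p ∩ pdom q = R := hroot _ hp.1.1.2 _ hq.1.1.2 hdne
        have hxR : x ∈ R := hRint ▸ Finset.mem_inter.mpr ⟨hxdp, hxdq⟩
        have : (x, mx) ∈ p.1 := (hagree x hxR mx).mpr ha'
        exact p.2.1 (x, mx) this (x, my) hb' rfl
      · exact q.2.1 a ha' b hb' hfst
    · rintro a ha b hb hlt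
      rcases Finset.mem_union.mp ha with ha' | ha' <;>
        rcases Finset.mem_union.mp hb with hb' | hb'
      · exact p.2.2 a ha' b hb' hlt
      · exact hcross a ha' b hb' hlt
      · -- a ∈ q, b ∈ p with a.1 < b.1
        obtain ⟨x, mx⟩ := a
        obtain ⟨y, my⟩ := b
        simp only at hlt ⊢
        have hxdq : x ∈ pdom q := (mem_pdom q x).mpr ⟨mx, ha'⟩
        have hydp : y ∈ pdom p := (mem_pdom p y).mpr ⟨my, hb'⟩
        by_cases hxR : x ∈ R
        · have : (x, mx) ∈ p.1 := (hagree x hxR mx).mpr ha'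
          exact p.2.2 (x, mx) this (y, my) hb' hlt
        · by_cases hyR : y ∈ R
          · have : (y, my) ∈ q.1 := (hagree y hyR my).mp hb'
            exact q.2.2 (x, mx) ha' (y, my) this hlt
          · have hxt : x ∈ pdom q \ R := Finset.mem_sdiff.mpr ⟨hxdq, hxR⟩
            have hyt : y ∈ pdom p \ R := Finset.mem_sdiff.mpr ⟨hydp, hyR⟩
            exact absurd (le_of_lt hlt) (hinc y hyt x hxt).2
      · exact q.2.2 a ha' b hb' hlt
  exact ⟨⟨p.1 ∪ q.1, hGood⟩,
    Subtype.mk_le_mk.mpr (Finset.le_iff_subset.mpr Finset.subset_union_left),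
    Subtype.mk_le_mk.mpr (Finset.le_iff_subset.mpr Finset.subset_union_right)⟩

end CCC

lemma omega1_card : omega1.{u}.card = Cardinal.aleph 1 := Cardinal.card_ord _

/-- Under MA(ω₁), every Aronszajn tree is special. -/
theorem Aronszajn_special (hMA : MAomega1.{u}) :
    ∀ (T : Type u) [PartialOrder T], IsAronszajn T → IsSpecialTree T := by
  intro T _ hT
  classical
  have hLev := hT.2.2.1
  have hHt := hT.2.1.2
  have hNE : Nonempty {s : Finset (T × ℕ) // Good s} :=
    ⟨⟨∅, ⟨fun p hp => absurd hp (Finset.notMem_empty p),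
          fun p hp => absurd hp (Finset.notMem_empty p)⟩⟩⟩
  -- #T ≤ ℵ₁
  have hmkT : Cardinal.mk T ≤ Cardinal.aleph.{u} 1 := by
    have hflev : ∀ γ : Ordinal.{u}, ∃ fl : T → ℕ,
        ∀ x y : T, treeHeight x = γ → treeHeight y = γ → fl x = fl y → x = y := by
      intro γ
      have hc : Countable ↥{x : T | treeHeight x = γ} := (hLev γ).to_subtype
      obtain ⟨f0, hf0⟩ := exists_injective_nat ↥{x : T | treeHeight x = γ}
      refine ⟨fun x => if h : treeHeight x = γ then f0 ⟨x, h⟩ else 0, ?_⟩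
      intro x y hx hy hxy
      simp only at hxy
      rw [dif_pos hx, dif_pos hy] at hxy
      exact congrArg Subtype.val (hf0 hxy)
    choose fl hfl using hflev
    have htype : @Ordinal.type omega1.{u}.ToType (· < ·) isWellOrder_lt = omega1.{u} :=
      Ordinal.type_toType _
    have hmem : ∀ x : T, treeHeight x ∈ {o : Ordinal.{u} |
        o < @Ordinal.type omega1.{u}.ToType (· < ·) isWellOrder_lt} := by
      intro x
      rw [htype]
      exact hHt x
    set emb : T → omega1.{u}.ToType × ℕ := fun x =>
      ((@Ordinal.enum omega1.{u}.ToType (· < ·) isWellOrder_lt) ⟨treeHeight x, hmem x⟩,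
        fl (treeHeight x) x) with hemb
    have hembinj : Function.Injective emb := by
      intro x y hxy
      rw [hemb] at hxy
      simp only [Prod.mk.injEq] at hxy
      obtain ⟨h1, h2⟩ := hxy
      have h3 := (@Ordinal.enum omega1.{u}.ToType (· < ·) isWellOrder_lt).injective h1
      have hγ : treeHeight x = treeHeight y := congrArg Subtype.val h3
      rw [hγ] at h2
      exact hfl (treeHeight y) x y hγ rfl h2
    refine le_trans (Cardinal.mk_le_of_injective hembinj) ?_
    rw [Cardinal.mk_prod, mk_toType, omega1_card, Cardinal.mk_nat]
    rw [Cardinal.lift_aleph0, Cardinal.lift_id'.{0, u}]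
    rw [Cardinal.mul_eq_max (Cardinal.aleph0_le_aleph 1) le_rfl]
    exact le_of_eq (sup_eq_left.mpr (Cardinal.aleph0_le_aleph 1))
  -- dense sets
  set Dx : T → Set {s : Finset (T × ℕ) // Good s} := fun x => {p | x ∈ pdom p} with hDx
  have hmk : Cardinal.mk ↥(Set.range Dx) ≤ Cardinal.aleph.{u} 1 :=
    le_trans Cardinal.mk_range_le hmkT
  have hdense : ∀ Ds ∈ Set.range Dx, ∀ p : {s : Finset (T × ℕ) // Good s},
      ∃ q ∈ Ds, p ≤ q := by
    rintro Ds ⟨x, rfl⟩ p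
    by_cases hx : x ∈ pdom p
    · exact ⟨p, hx, le_rfl⟩
    · obtain ⟨m, hm⟩ := Infinite.exists_notMem_finset (p.1.image Prod.snd)
      have hGood : Good (insert (x, m) p.1) := by
        constructor
        · rintro ⟨xa, ma⟩ ha ⟨xb, mb⟩ hb hfst
          simp only at hfst ⊢
          rcases Finset.mem_insert.mp ha with h1 | ha' <;>
            rcases Finset.mem_insert.mp hb with h2 | hb'
          · rw [Prod.mk.injEq] at h1 h2
            rw [h1.2, h2.2]
          · rw [Prod.mk.injEq] at h1
            exfalso
            apply hx
            refine (mem_pdom p x).mpr ⟨mb, ?_⟩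
            have hxb : xb = x := by rw [← hfst, h1.1]
            rwa [← hxb]
          · rw [Prod.mk.injEq] at h2
            exfalso
            apply hx
            refine (mem_pdom p x).mpr ⟨ma, ?_⟩
            have hxa : xa = x := by rw [hfst, h2.1]
            rwa [← hxa]
          · exact p.2.1 _ ha' _ hb' hfst
        · rintro ⟨xa, ma⟩ ha ⟨xb, mb⟩ hb hlt
          simp only at hlt ⊢
          rcases Finset.mem_insert.mp ha with h1 | ha' <;>
            rcases Finset.mem_insert.mp hb with h2 | hb'
          · rw [Prod.mk.injEq] at h1 h2
            rw [h1.1, h2.1] at hlt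
            exact absurd hlt (lt_irrefl _)
          · rw [Prod.mk.injEq] at h1
            intro hval
            apply hm
            rw [← h1.2, hval]
            exact Finset.mem_image_of_mem Prod.snd hb'
          · rw [Prod.mk.injEq] at h2
            intro hval
            apply hm
            rw [← h2.2, ← hval]
            exact Finset.mem_image_of_mem Prod.snd ha'
          · exact p.2.2 _ ha' _ hb' hlt
      refine ⟨⟨insert (x, m) p.1, hGood⟩, ?_, ?_⟩
      · show x ∈ pdom _
        exact (mem_pdom _ x).mpr ⟨m, Finset.mem_insert_self _ _⟩
      · exact Subtype.mk_le_mk.mpr (Finset.le_iff_subset.mpr (Finset.subset_insert _ _))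
  obtain ⟨G, hdir, hdown, hmeet⟩ := hMA _ hNE (spec_ccc hMA hT) (Set.range Dx) hmk hdense
  have hcov : ∀ x : T, ∃ p, p ∈ G ∧ x ∈ pdom p := by
    intro x
    obtain ⟨p, hpG, hpD⟩ := hmeet (Dx x) ⟨x, rfl⟩
    exact ⟨p, hpG, hpD⟩
  choose pf hpfG hpfD using hcov
  refine ⟨fun n => {x | pval (pf x) x = n}, ?_, fun x => ⟨pval (pf x) x, rfl⟩⟩
  intro n x hx y hy hxy hle
  have hlt : x < y := lt_of_le_of_ne hle hxy
  obtain ⟨r, hrG, hxr, hyr⟩ := hdir _ (hpfG x) _ (hpfG y)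
  have hmx : (x, pval (pf x) x) ∈ (pf x).1 := (mem_iff_pval _ x _).mpr ⟨hpfD x, rfl⟩
  have hmy : (y, pval (pf y) y) ∈ (pf y).1 := (mem_iff_pval _ y _).mpr ⟨hpfD y, rfl⟩
  have hmxr : (x, pval (pf x) x) ∈ r.1 :=
    Finset.le_iff_subset.mp (Subtype.coe_le_coe.mpr hxr) hmx
  have hmyr : (y, pval (pf y) y) ∈ r.1 :=
    Finset.le_iff_subset.mp (Subtype.coe_le_coe.mpr hyr) hmy
  have := r.2.2 _ hmxr _ hmyr hlt
  simp only at this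
  rw [hx, hy] at this
  exact this rfl
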